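/- Let M be a DFA over alphabet Σ. Suppose there exist a state q, words p, s with: evaluating M on p from the start state reaches q, reading s from q reaches an accepting state, and there exist words u, v with reading u from q returning to q, reading v from q returning to q, and u, v prefix-incomparable. Then the language accepted by M is not bounded: for every finite list of words w₁, …, wₙ, L(M) is not contained in w₁*·⋯·wₙ*. -/

import Mathlib

open Computability

/-- The product of Kleene stars of singletons `w₁*·w₂*·⋯·wₙ*`. -/
def prodStars {A : Type*} (ws : List (List A)) : Language A :=
  (ws.map fun w => ({w} : Language A)∗).prod

section Aux

variable {A : Type*}

lemma mem_kstar_singleton {x w : List A} (h : x ∈ ({w} : Language A)∗) :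
    ∃ m, x = (List.replicate m w).flatten := by
  rw [Language.mem_kstar] at h
  obtain ⟨L, rfl, hL⟩ := h
  exact ⟨L.length, by rw [← (List.eq_replicate_iff).2 ⟨rfl, fun b hb => hL b hb⟩]⟩

lemma len_rep_flatten (m : ℕ) (w : List A) :
    ((List.replicate m w).flatten).length = m * w.length := by
  simp [List.length_flatten, List.map_replicate, List.sum_replicate, smul_eq_mul]

lemma flatten_replicate_nil (m : ℕ) :
    (List.replicate m ([] : List A)).flatten = [] := by
  induction m with
  | zero => simp
  | succ m ih => simp [List.replicate_succ, ih]

/-- Counting: words of length ≤ N in `prodStars ws` number at most `(N+1)^(ws.length)`. -/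
lemma prodStars_bounded_finite_card (ws : List (List A)) (N : ℕ) :
    ({x : List A | x ∈ prodStars ws ∧ x.length ≤ N}).Finite ∧
    Nat.card {x : List A | x ∈ prodStars ws ∧ x.length ≤ N} ≤ (N + 1) ^ ws.length := by
  induction ws with
  | nil =>
    have hsub : {x : List A | x ∈ prodStars ([] : List (List A)) ∧ x.length ≤ N}
        ⊆ ({[]} : Set (List A)) := by
      rintro x ⟨hx, -⟩
      simpa [prodStars, Language.mem_one] using hx
    have hfin : ({[]} : Set (List A)).Finite := Set.finite_singleton _
    refine ⟨hfin.subset hsub, ?_⟩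
    calc Nat.card {x : List A | x ∈ prodStars ([] : List (List A)) ∧ x.length ≤ N}
        ≤ Nat.card ({[]} : Set (List A)) := Nat.card_mono hfin hsub
      _ = 1 := by simp [Nat.card_coe_set_eq]
      _ ≤ (N + 1) ^ (List.length ([] : List (List A))) := by simp
  | cons w ws ih =>
    obtain ⟨hfin, hcard⟩ := ih
    haveI : Finite {x : List A | x ∈ prodStars ws ∧ x.length ≤ N} := hfin.to_subtype
    let φ : Fin (N + 1) × {x : List A | x ∈ prodStars ws ∧ x.length ≤ N} → List A :=
      fun mb => (List.replicate mb.1.val w).flatten ++ mb.2.val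
    have hsub : {x : List A | x ∈ prodStars (w :: ws) ∧ x.length ≤ N} ⊆ Set.range φ := by
      rintro x ⟨hx, hlen⟩
      have hx' : x ∈ ({w} : Language A)∗ * prodStars ws := by
        simpa [prodStars] using hx
      rw [Language.mem_mul] at hx'
      obtain ⟨aa, ha, b, hb, rfl⟩ := hx'
      obtain ⟨m, rfl⟩ := mem_kstar_singleton ha
      have hlen' : m * w.length + b.length ≤ N := by
        simpa [List.length_append, len_rep_flatten] using hlen
      have hbS : b ∈ {x : List A | x ∈ prodStars ws ∧ x.length ≤ N} := ⟨hb, by omega⟩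
      by_cases hw : w = []
      · refine ⟨(⟨0, by omega⟩, ⟨b, hbS⟩), ?_⟩
        simp [φ, hw, flatten_replicate_nil]
      · have hwl : 1 ≤ w.length := List.length_pos_iff.mpr hw
        have hm : m ≤ N := by
          have : m * 1 ≤ m * w.length := Nat.mul_le_mul_left m hwl
          omega
        exact ⟨(⟨m, by omega⟩, ⟨b, hbS⟩), rfl⟩
    have hfin2 : (Set.range φ).Finite := Set.finite_range φ
    refine ⟨hfin2.subset hsub, ?_⟩
    calc Nat.card {x : List A | x ∈ prodStars (w :: ws) ∧ x.length ≤ N}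
        ≤ Nat.card (Set.range φ) := Nat.card_mono hfin2 hsub
      _ ≤ Nat.card (Fin (N + 1) × {x : List A | x ∈ prodStars ws ∧ x.length ≤ N}) :=
          Nat.card_le_card_of_surjective _ Set.rangeFactorization_surjective
      _ = (N + 1) * Nat.card {x : List A | x ∈ prodStars ws ∧ x.length ≤ N} := by
          simp [Nat.card_prod]
      _ ≤ (N + 1) * (N + 1) ^ ws.length := Nat.mul_le_mul_left _ hcard
      _ = (N + 1) ^ (w :: ws).length := by rw [List.length_cons]; ring

/-- Freeness: concatenations of equal numbers of blocks from a prefix-incomparable pair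
are uniquely decipherable. -/
lemma blocks_inj {u v : List A} (huv : ¬ u <+: v) (hvu : ¬ v <+: u) :
    ∀ b₁ b₂ : List Bool, b₁.length = b₂.length →
      (b₁.map fun t => if t then u else v).flatten =
        (b₂.map fun t => if t then u else v).flatten →
      b₁ = b₂ := by
  have key : ∀ (X Y : List A), u ++ X = v ++ Y → False := by
    intro X Y hXY
    rcases List.prefix_or_prefix_of_prefix (⟨X, hXY⟩ : u <+: v ++ Y) ⟨Y, rfl⟩ with h | h
    · exact huv h
    · exact hvu h
  intro b₁
  induction b₁ with
  | nil =>
    intro b₂ hl _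
    cases b₂ with
    | nil => rfl
    | cons _ _ => simp at hl
  | cons t₁ r₁ ih =>
    intro b₂ hl hf
    cases b₂ with
    | nil => simp at hl
    | cons t₂ r₂ =>
      simp only [List.map_cons, List.flatten_cons] at hf
      have hte : t₁ = t₂ := by
        cases t₁ <;> cases t₂ <;>
          first
            | rfl
            | (exfalso
               simp only [if_true, if_false, Bool.false_eq_true, Bool.true_eq_false] at hf
               first
                 | exact key _ _ hf
                 | exact key _ _ hf.symm)
      subst hte
      have h2 := List.append_cancel_left hf
      rw [ih r₂ (by simpa using hl) h2]

end Aux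

/-- A DFA with two prefix-incomparable cycles at a reachable, co-reachable
state accepts an unbounded language. -/
theorem accepts_not_bounded_of_incomparable_cycles {A σ : Type*} (M : DFA A σ)
    (q : σ) (p s : List A)
    (hp : M.evalFrom M.start p = q)
    (hs : M.evalFrom q s ∈ M.accept)
    (u v : List A)
    (hu : M.evalFrom q u = q) (hv : M.evalFrom q v = q)
    (huv : ¬ u <+: v) (hvu : ¬ v <+: u) :
    ∀ ws : List (List A), ¬ (M.accepts ≤ prodStars ws) := by
  intro ws h
  -- basic facts
  have hune : u ≠ [] := by
    rintro rfl
    exact huv List.nil_prefix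
  set c := max u.length v.length with hc
  have hc1 : 1 ≤ c := le_trans (List.length_pos_iff.mpr hune) (le_max_left _ _)
  set a := p.length + s.length with ha
  -- cycles stay at q
  have cyc : ∀ b : List Bool, M.evalFrom q ((b.map fun t => if t then u else v).flatten) = q := by
    intro b
    induction b with
    | nil => simp
    | cons t r ihr =>
      simp only [List.map_cons, List.flatten_cons]
      rw [DFA.evalFrom_of_append]
      cases t
      · rw [if_neg (by simp), hv, ihr]
      · rw [if_pos rfl, hu, ihr]
  -- acceptance of pumped words
  have acc : ∀ b : List Bool,
      (p ++ ((b.map fun t => if t then u else v).flatten) ++ s) ∈ M.accepts := by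
    intro b
    rw [DFA.mem_accepts]
    show M.evalFrom M.start _ ∈ M.accept
    rw [DFA.evalFrom_of_append, DFA.evalFrom_of_append, hp, cyc b]
    exact hs
  -- length bound on pumped part
  have lenb : ∀ b : List Bool,
      ((b.map fun t => if t then u else v).flatten).length ≤ c * b.length := by
    intro b
    induction b with
    | nil => simp
    | cons t r ihr =>
      simp only [List.map_cons, List.flatten_cons, List.length_append, List.length_cons]
      have hblock : (if t then u else v).length ≤ c := by
        cases t
        · rw [if_neg (by simp), hc]; exact le_max_right _ _
        · rw [if_pos rfl, hc]; exact le_max_left _ _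
      calc (if t then u else v).length + ((r.map fun t => if t then u else v).flatten).length
          ≤ c + c * r.length := add_le_add hblock ihr
        _ = c * (r.length + 1) := by ring
  -- key counting inequality
  have key : ∀ k : ℕ, 2 ^ k ≤ (a + c * k + 1) ^ ws.length := by
    intro k
    obtain ⟨hfin, hcard⟩ := prodStars_bounded_finite_card ws (a + c * k)
    haveI : Finite {x : List A | x ∈ prodStars ws ∧ x.length ≤ a + c * k} := hfin.to_subtype
    have hmemS : ∀ b : Fin k → Bool,
        (p ++ (((List.ofFn b).map fun t => if t then u else v).flatten) ++ s)
          ∈ {x : List A | x ∈ prodStars ws ∧ x.length ≤ a + c * k} := by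
      intro b
      refine ⟨h (acc (List.ofFn b)), ?_⟩
      have := lenb (List.ofFn b)
      simp only [List.length_ofFn] at this
      simp only [List.length_append]
      omega
    let F : (Fin k → Bool) → {x : List A | x ∈ prodStars ws ∧ x.length ≤ a + c * k} :=
      fun b => ⟨_, hmemS b⟩
    have Finj : Function.Injective F := by
      intro b₁ b₂ hFb
      have hval := congrArg Subtype.val hFb
      simp only [F] at hval
      rw [List.append_assoc, List.append_assoc] at hval
      have h1 := List.append_cancel_left hval
      have h2 := List.append_cancel_right h1
      have := blocks_inj huv hvu _ _ (by simp) h2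
      exact List.ofFn_inj.mp this
    calc 2 ^ k = Nat.card (Fin k → Bool) := by simp [Nat.card_eq_fintype_card]
      _ ≤ Nat.card {x : List A | x ∈ prodStars ws ∧ x.length ≤ a + c * k} :=
          Nat.card_le_card_of_injective F Finj
      _ ≤ (a + c * k + 1) ^ ws.length := hcard
  -- derive a contradiction from exponential vs polynomial growth
  rcases Nat.eq_zero_or_pos ws.length with hn | hn
  · have hk := key 1
    rw [hn] at hk
    simp at hk
  · set n := ws.length with hn'
    set D := a + c + 1 with hD
    set t := 2 * n * D + D + 1 with ht
    set k := 2 * n * t with hk'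
    have ht1 : 1 ≤ t := by rw [ht]; omega
    have h1 : a + c * k + 1 ≤ D * (k + 1) := by nlinarith
    have h2 : D * (k + 1) ≤ t * t := by
      have hDt : D ≤ D * t := Nat.le_mul_of_pos_right D ht1
      calc D * (k + 1) = 2 * n * D * t + D := by rw [hk']; ring
        _ ≤ 2 * n * D * t + D * t + t := by omega
        _ = t * t := by rw [ht]; ring
    have h3 : t * t < 2 ^ (2 * t) := by
      have htt := (Nat.lt_two_pow_self (n := t))
      calc t * t < 2 ^ t * 2 ^ t := Nat.mul_lt_mul_of_lt_of_lt htt htt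
        _ = 2 ^ (2 * t) := by rw [← pow_add]; ring_nf
    have h4 : (2 : ℕ) ^ k ≤ (a + c * k + 1) ^ n := key k
    have h5 : (a + c * k + 1) ^ n ≤ (t * t) ^ n := Nat.pow_le_pow_left (le_trans h1 h2) n
    have h6 : (t * t) ^ n < (2 ^ (2 * t)) ^ n := Nat.pow_lt_pow_left h3 (by omega)
    have h7 : ((2 : ℕ) ^ (2 * t)) ^ n = 2 ^ k := by rw [← pow_mul, hk']; ring_nf
    omega
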